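/- Let θ ~ χ²_1 and let c > 0 be a constant. Then E[√(c + θ)] = √2 · U(-1/2, 0, c/2), where U(a,b,z) is Tricomi's confluent hypergeometric function. -/

import Mathlib

open MeasureTheory Real Set

/-- Tricomi's confluent hypergeometric function `U(a,b,z)`, defined by its integral
representation for `a > 0` and extended via Kummer's relation
`U(a,b,z) = z^(1-b) U(a-b+1, 2-b, z)` otherwise. -/
noncomputable def tricomiU (a b z : ℝ) : ℝ :=
  if 0 < a then
    (Gamma a)⁻¹ * ∫ t in Ioi (0:ℝ), Real.exp (-(z * t)) * t ^ (a - 1) * (1 + t) ^ (b - a - 1)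
  else
    z ^ (1 - b) *
      ((Gamma (a - b + 1))⁻¹ *
        ∫ t in Ioi (0:ℝ), Real.exp (-(z * t)) * t ^ (a - b) * (1 + t) ^ (-a))

/-- If θ ~ χ²₁ and c > 0, then E[√(c+θ)] = √2 · U(-1/2, 0, c/2). -/
theorem chisq_sqrt_shift_mean (c : ℝ) (hc : 0 < c) :
    (∫ θ in Ioi (0:ℝ),
        Real.sqrt (c + θ) * ((2 * π * θ) ^ (-(1:ℝ)/2) * Real.exp (-θ/2))) =
      Real.sqrt 2 * tricomiU (-(1/2)) 0 (c/2) := by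
  have h2π : (0:ℝ) < 2 * π := by positivity
  rw [tricomiU, if_neg (by norm_num)]
  have hsub := integral_comp_mul_left_Ioi
      (fun θ => Real.sqrt (c + θ) * ((2 * π * θ) ^ (-(1:ℝ)/2) * Real.exp (-θ/2))) 0 hc
  rw [mul_zero] at hsub
  have hL : (∫ θ in Ioi (0:ℝ),
        Real.sqrt (c + θ) * ((2 * π * θ) ^ (-(1:ℝ)/2) * Real.exp (-θ/2)))
      = c * ∫ t in Ioi (0:ℝ),
        Real.sqrt (c + c * t) * ((2 * π * (c * t)) ^ (-(1:ℝ)/2) * Real.exp (-(c * t)/2)) := by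
    rw [hsub, smul_eq_mul, ← mul_assoc, mul_inv_cancel₀ hc.ne', one_mul]
  rw [hL]
  have hpt : EqOn
      (fun t : ℝ => Real.sqrt (c + c * t) *
        ((2 * π * (c * t)) ^ (-(1:ℝ)/2) * Real.exp (-(c * t)/2)))
      (fun t : ℝ => (2 * π) ^ (-(1:ℝ)/2) *
        (Real.exp (-(c/2 * t)) * t ^ ((-(1/2) : ℝ) - 0) * (1 + t) ^ (-(-(1/2)) : ℝ)))
      (Ioi (0:ℝ)) := by
    intro t ht
    have ht' : (0:ℝ) < t := ht
    have h1t : (0:ℝ) ≤ 1 + t := by linarith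
    simp only
    rw [show c + c * t = c * (1 + t) by ring, Real.sqrt_mul hc.le,
      show 2 * π * (c * t) = 2 * π * c * t by ring,
      Real.mul_rpow (by positivity) ht'.le, Real.mul_rpow h2π.le hc.le,
      Real.sqrt_eq_rpow, Real.sqrt_eq_rpow (1 + t)]
    rw [show Real.exp (-(c * t)/2) = Real.exp (-(c/2 * t)) by ring_nf]
    have hcc : c ^ ((1:ℝ)/2) * c ^ (-(1:ℝ)/2) = 1 := by
      rw [← Real.rpow_add hc]; norm_num
    have : (-(1/2) : ℝ) - 0 = -(1:ℝ)/2 := by norm_num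
    rw [this, show (-(-(1/2)) : ℝ) = (1:ℝ)/2 by norm_num]
    calc c ^ ((1:ℝ)/2) * (1 + t) ^ ((1:ℝ)/2) *
          ((2 * π) ^ (-(1:ℝ)/2) * c ^ (-(1:ℝ)/2) * t ^ (-(1:ℝ)/2) * Real.exp (-(c/2 * t)))
        = (c ^ ((1:ℝ)/2) * c ^ (-(1:ℝ)/2)) * ((2 * π) ^ (-(1:ℝ)/2) *
            (Real.exp (-(c/2 * t)) * t ^ (-(1:ℝ)/2) * (1 + t) ^ ((1:ℝ)/2))) := by ring
      _ = (2 * π) ^ (-(1:ℝ)/2) *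
            (Real.exp (-(c/2 * t)) * t ^ (-(1:ℝ)/2) * (1 + t) ^ ((1:ℝ)/2)) := by
          rw [hcc, one_mul]
  rw [setIntegral_congr_fun measurableSet_Ioi hpt, integral_const_mul]
  have hG : Real.Gamma ((-(1/2) : ℝ) - 0 + 1) = Real.sqrt π := by
    rw [show ((-(1/2) : ℝ) - 0 + 1) = (1/2 : ℝ) by norm_num, Real.Gamma_one_half_eq]
  rw [hG, show ((1:ℝ) - 0) = (1:ℝ) by norm_num, Real.rpow_one]
  have h2πs : (2 * π) ^ (-(1:ℝ)/2) = (Real.sqrt 2 * Real.sqrt π)⁻¹ := by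
    rw [show (-(1:ℝ)/2) = -((1:ℝ)/2) by norm_num, Real.rpow_neg h2π.le,
      ← Real.sqrt_eq_rpow, Real.sqrt_mul (by norm_num : (0:ℝ) ≤ 2)]
  rw [h2πs]
  have h2 : Real.sqrt 2 * Real.sqrt 2 = 2 := Real.mul_self_sqrt (by norm_num)
  have hπ : (0:ℝ) < Real.sqrt π := Real.sqrt_pos.mpr Real.pi_pos
  have h2' : (0:ℝ) < Real.sqrt 2 := Real.sqrt_pos.mpr (by norm_num)
  generalize (∫ t in Ioi (0:ℝ),
      Real.exp (-(c/2 * t)) * t ^ ((-(1/2) : ℝ) - 0) * (1 + t) ^ (-(-(1/2)) : ℝ)) = I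
  field_simp
  linear_combination (-I) * h2
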